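/- Let α > 0 and β > −1, let P be the monic polynomial of degree n with ∫_0^1 P(x) x^{β}(1−x)^{α} x^k dx = 0 for k = 0, …, n−1, and let Q be the monic polynomial of degree n with ∫_0^1 Q(x) x^{β+1}(1−x)^{α−1} x^k dx = 0 for k = 0, …, n−1. Then for all x ∈ (0,1): d/dx [ (1−x)^α P(x) ] = −(α + n) (1−x)^{α−1} Q(x). -/

import Mathlib

open MeasureTheory Polynomial Set intervalIntegral

lemma weight_intervalIntegrable {γ δ : ℝ} (hγ : -1 < γ) (hδ : -1 < δ) :
    IntervalIntegrable (fun x : ℝ => x ^ γ * (1 - x) ^ δ) volume 0 1 := by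
  have left : ∀ {u v : ℝ}, -1 < u → IntervalIntegrable
      (fun x : ℝ => x ^ u * (1 - x) ^ v) volume 0 (1/2) := by
    intro u v hu
    apply IntervalIntegrable.mul_continuousOn (intervalIntegrable_rpow' hu)
    apply ContinuousOn.rpow_const
    · exact (continuous_const.sub continuous_id).continuousOn
    · intro x hx
      rw [uIcc_of_le (by norm_num : (0:ℝ) ≤ 1/2)] at hx
      left; linarith [hx.2]
  refine (left hγ).trans ?_
  rw [IntervalIntegrable.iff_comp_neg]
  have := ((left (v := γ) hδ).comp_add_right 1).symm
  convert this using 1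
  · ext x; ring_nf
  all_goals norm_num

lemma integrableOn_cont_weight {γ δ : ℝ} (hγ : -1 < γ) (hδ : -1 < δ) {f : ℝ → ℝ}
    (hf : ContinuousOn f (Set.Icc 0 1)) :
    IntegrableOn (fun x => f x * (x ^ γ * (1 - x) ^ δ)) (Set.Ioo 0 1) := by
  have h := (weight_intervalIntegrable hγ hδ).continuousOn_mul
    (by rwa [uIcc_of_le (by norm_num : (0:ℝ) ≤ 1)] : ContinuousOn f (uIcc 0 1))
  rw [intervalIntegrable_iff_integrableOn_Ioc_of_le (by norm_num : (0:ℝ) ≤ 1)] at h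
  exact h.mono_set Ioo_subset_Ioc_self

lemma deriv_weightP (α : ℝ) (P : Polynomial ℝ) {x : ℝ} (hx : x ∈ Set.Ioo (0:ℝ) 1) :
    HasDerivAt (fun y => (1 - y) ^ α * P.eval y)
      ((1 - x) ^ (α - 1) * ((1 - x) * (P.derivative.eval x) - α * P.eval x)) x := by
  have h1x : (0:ℝ) < 1 - x := by simp [Set.mem_Ioo] at hx; linarith [hx.2]
  have hbase : HasDerivAt (fun y : ℝ => 1 - y) (-1) x := by
    simpa using (hasDerivAt_id x).const_sub 1
  have hpow : HasDerivAt (fun y : ℝ => (1 - y) ^ α) (-(α * (1 - x) ^ (α - 1))) x := by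
    have := (Real.hasDerivAt_rpow_const (x := 1 - x) (p := α) (Or.inl h1x.ne')).comp x hbase
    exact this.congr_deriv (by ring)
  have hP : HasDerivAt (fun y => P.eval y) (P.derivative.eval x) x := P.hasDerivAt x
  have := hpow.mul hP
  refine this.congr_deriv ?_
  have : (1 - x) ^ α = (1 - x) ^ (α - 1) * (1 - x) := by
    rw [show α = α - 1 + 1 by ring, Real.rpow_add h1x, Real.rpow_one]
    ring_nf
  rw [this]; ring

lemma R_orth (α β : ℝ) (hα : 0 < α) (hβ : -1 < β) (P : Polynomial ℝ) (k : ℕ)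
    (hP0 : ∫ x in Set.Ioo (0:ℝ) 1, P.eval x * (x ^ β * (1 - x) ^ α) * x ^ k = 0) :
    ∫ x in Set.Ioo (0:ℝ) 1,
      ((1 - x) * (P.derivative.eval x) - α * P.eval x) * (x ^ (β + 1) * (1 - x) ^ (α - 1)) * x ^ k
      = 0 := by
  set m : ℝ := β + 1 + k with hm_def
  have hm : 0 < m := by
    have : (0:ℝ) ≤ (k:ℝ) := Nat.cast_nonneg k
    simp only [hm_def]; linarith
  set Rf : ℝ → ℝ := fun x => (1 - x) * P.derivative.eval x - α * P.eval x with hRf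
  set t1 : ℝ → ℝ := fun x => Rf x * (x ^ (β + 1) * (1 - x) ^ (α - 1)) * x ^ k with ht1
  set t2 : ℝ → ℝ := fun x => m * (P.eval x * (x ^ β * (1 - x) ^ α) * x ^ k) with ht2
  have hRcont : Continuous Rf := by fun_prop
  have hIt1 : IntegrableOn t1 (Set.Ioo 0 1) volume := by
    have := integrableOn_cont_weight (by linarith : (-1:ℝ) < β + 1) (by linarith : (-1:ℝ) < α - 1)
      (f := fun x => Rf x * x ^ k) ((hRcont.mul (continuous_pow k)).continuousOn)
    exact this.congr_fun (fun x _ => by ring) measurableSet_Ioo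
  have hIt2 : IntegrableOn t2 (Set.Ioo 0 1) volume := by
    have := integrableOn_cont_weight hβ (by linarith : (-1:ℝ) < α)
      (f := fun x => m * (P.eval x * x ^ k))
      ((continuous_const.mul ((P.continuous_aeval).mul (continuous_pow k))).continuousOn)
    exact this.congr_fun (fun x _ => by simp only [ht2]; ring) measurableSet_Ioo
  set G : ℝ → ℝ := fun y => ((1 - y) ^ α * P.eval y) * y ^ m with hG_def
  have hG : ∀ x ∈ Set.Ioo (0:ℝ) 1, HasDerivAt G (t1 x + t2 x) x := by
    intro x hx
    have hx0 : (0:ℝ) < x := hx.1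
    have hpow : HasDerivAt (fun y : ℝ => y ^ m) (m * x ^ (m - 1)) x :=
      Real.hasDerivAt_rpow_const (Or.inl hx0.ne')
    have key := (deriv_weightP α P hx).mul hpow
    refine key.congr_deriv ?_
    have e1 : x ^ m = x ^ (β + 1) * x ^ (k:ℝ) := by
      rw [← Real.rpow_add hx0]
    have e2 : x ^ (m - 1) = x ^ β * x ^ (k:ℝ) := by
      rw [← Real.rpow_add hx0, hm_def]; ring_nf
    simp only [ht1, ht2, hRf]
    rw [e1, e2, Real.rpow_natCast]
    ring
  have hint : IntervalIntegrable (fun x => t1 x + t2 x) volume 0 1 := by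
    rw [intervalIntegrable_iff_integrableOn_Ioo_of_le (by norm_num : (0:ℝ) ≤ 1)]
    exact hIt1.add hIt2
  have hlim0 : Filter.Tendsto G (nhdsWithin 0 (Set.Ioi 0)) (nhds 0) := by
    have hca : ContinuousAt (fun y : ℝ => (1 - y) ^ α * P.eval y) 0 := by
      apply ContinuousAt.mul _ (P.continuous_aeval.continuousAt)
      have hb : ContinuousAt (fun t : ℝ => t ^ α) ((fun y : ℝ => 1 - y) 0) := by
        apply Real.continuousAt_rpow_const
        norm_num
      exact hb.comp ((continuous_const.sub continuous_id).continuousAt)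
    have h1 := hca.tendsto
    have h2 : Filter.Tendsto (fun y : ℝ => y ^ m) (nhdsWithin 0 (Set.Ioi 0)) (nhds 0) := by
      have hb : ContinuousAt (fun t : ℝ => t ^ m) 0 :=
        Real.continuousAt_rpow_const 0 m (Or.inr hm.le)
      have := hb.tendsto
      rw [Real.zero_rpow hm.ne'] at this
      exact this.mono_left nhdsWithin_le_nhds
    have := (h1.mono_left nhdsWithin_le_nhds).mul h2
    simpa using this
  have hlim1 : Filter.Tendsto G (nhdsWithin 1 (Set.Iio 1)) (nhds 0) := by
    have h1 : Filter.Tendsto (fun y : ℝ => (1 - y) ^ α) (nhds 1) (nhds 0) := by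
      have hb : ContinuousAt (fun t : ℝ => t ^ α) 0 :=
        Real.continuousAt_rpow_const 0 α (Or.inr hα.le)
      have h0 : Filter.Tendsto (fun y : ℝ => 1 - y) (nhds 1) (nhds 0) := by
        have := ((continuous_const.sub continuous_id).tendsto (1:ℝ) :
          Filter.Tendsto (fun y : ℝ => 1 - y) (nhds 1) (nhds ((fun y : ℝ => 1 - y) 1)))
        convert this using 2 <;> simp
      have := hb.tendsto.comp h0
      rwa [Real.zero_rpow hα.ne'] at this
    have h2 : Filter.Tendsto (fun y : ℝ => P.eval y * y ^ m) (nhds 1)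
        (nhds (P.eval 1 * (1:ℝ) ^ m)) := by
      apply ContinuousAt.tendsto
      exact (P.continuous_aeval.continuousAt).mul
        (Real.continuousAt_rpow_const 1 m (Or.inl one_ne_zero))
    have := h1.mul h2
    rw [zero_mul] at this
    have heq : G = fun y => (1 - y) ^ α * (P.eval y * y ^ m) := by
      funext y; simp only [hG_def]; ring
    rw [heq]
    exact this.mono_left nhdsWithin_le_nhds
  have hFTC := intervalIntegral.integral_eq_sub_of_hasDerivAt_of_tendsto
    (by norm_num : (0:ℝ) < 1) hG hint hlim0 hlim1
  rw [sub_zero] at hFTC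
  have hsplit : ∫ y in (0:ℝ)..1, (t1 y + t2 y) =
      (∫ y in Set.Ioo (0:ℝ) 1, t1 y) + ∫ y in Set.Ioo (0:ℝ) 1, t2 y := by
    rw [intervalIntegral.integral_of_le (by norm_num : (0:ℝ) ≤ 1),
      integral_Ioc_eq_integral_Ioo]
    exact integral_add hIt1 hIt2
  have ht2zero : ∫ y in Set.Ioo (0:ℝ) 1, t2 y = 0 := by
    simp only [ht2]
    rw [MeasureTheory.integral_const_mul, hP0, mul_zero]
  rw [hsplit, ht2zero, add_zero] at hFTC
  exact hFTC

lemma poly_zero_of_orth {γ δ : ℝ} (hγ : -1 < γ) (hδ : -1 < δ) (D : Polynomial ℝ) (n : ℕ)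
    (hdeg : D.natDegree < n)
    (horth : ∀ k < n,
      ∫ x in Set.Ioo (0:ℝ) 1, D.eval x * (x ^ γ * (1 - x) ^ δ) * x ^ k = 0) :
    D = 0 := by
  by_contra hD
  set w : ℝ → ℝ := fun x => x ^ γ * (1 - x) ^ δ with hw
  set f : ℝ → ℝ := fun x => D.eval x * D.eval x * w x with hf
  have hint : ∀ k, IntegrableOn
      (fun x => D.coeff k * (D.eval x * w x * x ^ k)) (Set.Ioo (0:ℝ) 1) volume := by
    intro k
    have := integrableOn_cont_weight hγ hδ
      (f := fun x => D.coeff k * (D.eval x * x ^ k))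
      ((continuous_const.mul ((D.continuous_aeval).mul (continuous_pow k))).continuousOn)
    exact this.congr_fun (fun x _ => by simp only [hw]; ring) measurableSet_Ioo
  have hI0 : ∫ x in Set.Ioo (0:ℝ) 1, f x = 0 := by
    have heq : Set.EqOn f
        (fun x => ∑ k ∈ Finset.range n, D.coeff k * (D.eval x * w x * x ^ k))
        (Set.Ioo 0 1) := by
      intro x _
      simp only [hf]
      nth_rewrite 1 [Polynomial.eval_eq_sum_range' hdeg x]
      rw [Finset.sum_mul, Finset.sum_mul]
      apply Finset.sum_congr rfl
      intro k _
      ring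
    rw [setIntegral_congr_fun measurableSet_Ioo heq,
      integral_finset_sum _ (fun k _ => hint k)]
    apply Finset.sum_eq_zero
    intro k hk
    rw [MeasureTheory.integral_const_mul]
    have := horth k (Finset.mem_range.mp hk)
    have heq2 : ∫ x in Set.Ioo (0:ℝ) 1, D.eval x * w x * x ^ k
        = ∫ x in Set.Ioo (0:ℝ) 1, D.eval x * (x ^ γ * (1 - x) ^ δ) * x ^ k := rfl
    rw [heq2, this, mul_zero]
  have hIf : IntegrableOn f (Set.Ioo (0:ℝ) 1) volume := by
    have := integrableOn_cont_weight hγ hδ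
      (f := fun x => D.eval x * D.eval x)
      ((D.continuous_aeval.mul D.continuous_aeval).continuousOn)
    exact this.congr_fun (fun x _ => rfl) measurableSet_Ioo
  have hnonneg : 0 ≤ᵐ[volume.restrict (Set.Ioo (0:ℝ) 1)] f := by
    filter_upwards [ae_restrict_mem measurableSet_Ioo] with x hx
    have hx0 : (0:ℝ) < x := hx.1
    have hx1 : (0:ℝ) < 1 - x := by linarith [hx.2]
    have : 0 < w x := mul_pos (Real.rpow_pos_of_pos hx0 γ) (Real.rpow_pos_of_pos hx1 δ)
    simp only [Pi.zero_apply, hf]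
    exact mul_nonneg (mul_self_nonneg _) this.le
  have hpos : 0 < ∫ x in Set.Ioo (0:ℝ) 1, f x := by
    rw [setIntegral_pos_iff_support_of_nonneg_ae hnonneg hIf]
    have hZfin : Set.Finite {x : ℝ | D.eval x = 0} := by
      apply Set.Finite.subset D.roots.toFinset.finite_toSet
      intro x hx
      exact Multiset.mem_toFinset.mpr (Polynomial.mem_roots'.mpr ⟨hD, hx⟩)
    have hsub : Set.Ioo (0:ℝ) 1 \ {x : ℝ | D.eval x = 0} ⊆ Function.support f ∩ Set.Ioo 0 1 := by
      intro x hx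
      obtain ⟨hx1, hx2⟩ := hx
      refine ⟨?_, hx1⟩
      have hx0 : (0:ℝ) < x := hx1.1
      have hx1' : (0:ℝ) < 1 - x := by linarith [hx1.2]
      have hwpos : 0 < w x := mul_pos (Real.rpow_pos_of_pos hx0 γ) (Real.rpow_pos_of_pos hx1' δ)
      have hDx : D.eval x ≠ 0 := hx2
      exact Function.mem_support.mpr (mul_pos (mul_self_pos.mpr hDx) hwpos).ne'
    calc (0:ENNReal) < volume (Set.Ioo (0:ℝ) 1 \ {x : ℝ | D.eval x = 0}) := by
          rw [measure_diff_null (Set.Finite.measure_zero hZfin volume)]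
          simp
      _ ≤ volume (Function.support f ∩ Set.Ioo 0 1) := measure_mono hsub
  rw [hI0] at hpos
  exact lt_irrefl _ hpos

/-- Lemma (first derivative): for the monic Jacobi polynomials on `[0,1]`,
`d/dx [(1-x)^α P_n^{(α,β)}(x)] = -(α+n) (1-x)^{α-1} P_n^{(α-1,β+1)}(x)` on `(0,1)`. -/
theorem stmt_3 (α β : ℝ) (hα : 0 < α) (hβ : -1 < β) (n : ℕ)
    (P Q : Polynomial ℝ)
    (hPm : P.Monic) (hPdeg : P.natDegree = n)
    (hPorth : ∀ k < n,
      ∫ x in Set.Ioo (0:ℝ) 1, P.eval x * (x ^ β * (1 - x) ^ α) * x ^ k = 0)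
    (hQm : Q.Monic) (hQdeg : Q.natDegree = n)
    (hQorth : ∀ k < n,
      ∫ x in Set.Ioo (0:ℝ) 1, Q.eval x * (x ^ (β + 1) * (1 - x) ^ (α - 1)) * x ^ k = 0) :
    ∀ x ∈ Set.Ioo (0:ℝ) 1,
      HasDerivAt (fun y => (1 - y) ^ α * P.eval y)
        (-(α + n) * (1 - x) ^ (α - 1) * Q.eval x) x := by
  have hPn : P.coeff n = 1 := by rw [← hPdeg]; exact hPm.coeff_natDegree
  have hQn : Q.coeff n = 1 := by rw [← hQdeg]; exact hQm.coeff_natDegree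
  set R : Polynomial ℝ := (1 - X) * derivative P - C α * P with hR
  set D : Polynomial ℝ := C (α + n) * Q + R with hD
  have hcoeff : ∀ j, n ≤ j → D.coeff j = 0 := by
    intro j hj
    have hPder : ∀ i, n ≤ i → (derivative P).coeff i = 0 := by
      intro i hi
      rw [coeff_derivative]
      rw [coeff_eq_zero_of_natDegree_lt (by omega : P.natDegree < i + 1)]
      ring
    simp only [hD, hR, coeff_add, coeff_sub, coeff_C_mul, sub_mul, one_mul]
    rcases eq_or_lt_of_le hj with rfl | hlt
    · cases n with
      | zero =>
        simp only [Polynomial.mul_coeff_zero, coeff_X_zero, zero_mul, hQn, hPn,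
          hPder 0 le_rfl]
        push_cast
        ring
      | succ m =>
        rw [coeff_X_mul, coeff_derivative, coeff_derivative, hQn, hPn,
          coeff_eq_zero_of_natDegree_lt (by omega : P.natDegree < m + 1 + 1)]
        push_cast
        ring
    · have hQj : Q.coeff j = 0 := coeff_eq_zero_of_natDegree_lt (by omega)
      have hPj : P.coeff j = 0 := coeff_eq_zero_of_natDegree_lt (by omega)
      have hXP : (X * derivative P).coeff j = 0 := by
        cases j with
        | zero => exact absurd hlt (by omega)
        | succ i => rw [coeff_X_mul]; exact hPder i (by omega)
      rw [hQj, hPj, hPder j hj, hXP]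
      ring
  have horthD : ∀ k < n,
      ∫ x in Set.Ioo (0:ℝ) 1, D.eval x * (x ^ (β + 1) * (1 - x) ^ (α - 1)) * x ^ k = 0 := by
    intro k hk
    have h1 := hQorth k hk
    have h2 := R_orth α β hα hβ P k (hPorth k hk)
    set A : ℝ → ℝ := fun x => Q.eval x * (x ^ (β + 1) * (1 - x) ^ (α - 1)) * x ^ k with hA
    set B : ℝ → ℝ := fun x =>
      ((1 - x) * (P.derivative.eval x) - α * P.eval x) * (x ^ (β + 1) * (1 - x) ^ (α - 1)) * x ^ k
      with hB
    have hIA : IntegrableOn A (Set.Ioo (0:ℝ) 1) volume := by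
      have := integrableOn_cont_weight (by linarith : (-1:ℝ) < β + 1)
        (by linarith : (-1:ℝ) < α - 1) (f := fun x => Q.eval x * x ^ k)
        ((Q.continuous_aeval.mul (continuous_pow k)).continuousOn)
      exact this.congr_fun (fun x _ => by simp only [hA]; ring) measurableSet_Ioo
    have hIB : IntegrableOn B (Set.Ioo (0:ℝ) 1) volume := by
      have hc : Continuous fun x : ℝ => ((1 - x) * (P.derivative.eval x) - α * P.eval x) * x ^ k :=
        by fun_prop
      have := integrableOn_cont_weight (by linarith : (-1:ℝ) < β + 1)
        (by linarith : (-1:ℝ) < α - 1)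
        (f := fun x => ((1 - x) * (P.derivative.eval x) - α * P.eval x) * x ^ k) hc.continuousOn
      exact this.congr_fun (fun x _ => by simp only [hB]; ring) measurableSet_Ioo
    have heqon : Set.EqOn (fun x => D.eval x * (x ^ (β + 1) * (1 - x) ^ (α - 1)) * x ^ k)
        (fun x => (α + n) * A x + B x) (Set.Ioo 0 1) := by
      intro x _
      simp only [hD, hR, eval_add, eval_sub, eval_mul, eval_C, eval_one, eval_X, hA, hB]
      ring
    rw [setIntegral_congr_fun measurableSet_Ioo heqon,
      integral_add (hIA.const_mul _) hIB, MeasureTheory.integral_const_mul, h1, h2, mul_zero, add_zero]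
  have hD0 : D = 0 := by
    by_contra h
    have hlt : D.natDegree < n := by
      by_contra h2
      push_neg at h2
      exact (Polynomial.leadingCoeff_ne_zero.mpr h) (hcoeff _ h2)
    exact h (poly_zero_of_orth (by linarith : (-1:ℝ) < β + 1)
      (by linarith : (-1:ℝ) < α - 1) D n hlt horthD)
  have hQR : ∀ y : ℝ, (1 - y) * P.derivative.eval y - α * P.eval y = -(α + n) * Q.eval y := by
    intro y
    have := congrArg (Polynomial.eval y) hD0
    simp only [hD, hR, eval_add, eval_sub, eval_mul, eval_C, eval_one, eval_X, eval_zero] at this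
    linarith
  intro x hx
  have h := deriv_weightP α P hx
  rw [hQR x] at h
  convert h using 1
  ring
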